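/- Consider the two-piece convex knapsack problem (CK). There exists an optimal solution x* of CK such that at most one index j ∈ [n] satisfies 0 < x*_j < u_j; equivalently, there exist S* ⊆ [n] and at most one index f ∈ [n] \ S* with x*_j = u_j for all j ∈ S*, 0 ≤ x*_f < u_f, and x*_j = 0 for all j ∈ [n] \ (S* ∪ {f}). -/

import Mathlib

private lemma sum_two (n : ℕ) (i j : Fin n) (hij : i ≠ j) (F : Fin n → ℝ → ℝ)
    (x y : Fin n → ℝ) (h : ∀ k, k ≠ i → k ≠ j → y k = x k) :
    ∑ k, F k (y k) =
      (∑ k, F k (x k)) + (F i (y i) - F i (x i)) + (F j (y j) - F j (x j)) := by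
  have h1 : ∑ k, (F k (y k) - F k (x k)) =
      ∑ k ∈ ({i, j} : Finset (Fin n)), (F k (y k) - F k (x k)) := by
    refine (Finset.sum_subset (Finset.subset_univ _) ?_).symm
    intro k _ hk
    simp only [Finset.mem_insert, Finset.mem_singleton, not_or] at hk
    rw [h k hk.1 hk.2]; ring
  rw [Finset.sum_sub_distrib, Finset.sum_pair hij] at h1
  linarith

private lemma conv_piece (γ β a b l m : ℝ) (hl : 0 ≤ l) (hm : 0 ≤ m) (hs : l + m = 1) :
    max (γ + β * (l * a + m * b)) 0 ≤ l * max (γ + β * a) 0 + m * max (γ + β * b) 0 := by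
  have h1 : γ + β * (l * a + m * b) = l * (γ + β * a) + m * (γ + β * b) := by
    linear_combination (-γ) * hs
  rw [h1]
  apply max_le
  · exact add_le_add (mul_le_mul_of_nonneg_left (le_max_left _ _) hl)
      (mul_le_mul_of_nonneg_left (le_max_left _ _) hm)
  · exact add_nonneg (mul_nonneg hl (le_max_right _ _))
      (mul_nonneg hm (le_max_right _ _))

set_option maxHeartbeats 1000000 in
/-- Observation 2: the two-piece convex knapsack problem (CK) has an optimal
(extreme-point) solution with at most one coordinate strictly between its
bounds; all other coordinates are `0` or `u_j`. -/
theorem stmt_8 (n : ℕ) (hn : 1 ≤ n) (γ β u : Fin n → ℝ)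
    (hβ : ∀ j, 0 < β j) (hu : ∀ j, 0 < u j) (hpos : ∀ j, 0 < γ j + β j * u j)
    (Ω : ℝ) (hΩ : 0 < Ω) :
    ∃ xstar : Fin n → ℝ,
      ((∀ j, 0 ≤ xstar j ∧ xstar j ≤ u j) ∧ ∑ j, xstar j ≤ Ω) ∧
      IsGreatest ((fun x : Fin n → ℝ => ∑ j, max (γ j + β j * x j) 0) ''
          {x | (∀ j, 0 ≤ x j ∧ x j ≤ u j) ∧ ∑ j, x j ≤ Ω})
        (∑ j, max (γ j + β j * xstar j) 0) ∧
      (∀ i j : Fin n, (0 < xstar i ∧ xstar i < u i) →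
        (0 < xstar j ∧ xstar j < u j) → i = j) := by
  classical
  set f : (Fin n → ℝ) → ℝ := fun x => ∑ j, max (γ j + β j * x j) 0 with hf
  set K : Set (Fin n → ℝ) := {x | (∀ j, 0 ≤ x j ∧ x j ≤ u j) ∧ ∑ j, x j ≤ Ω} with hKdef
  have hKne : K.Nonempty := by
    refine ⟨0, ⟨fun j => ⟨le_refl _, (hu j).le⟩, ?_⟩⟩
    simp [hΩ.le]
  have hsumc : Continuous (fun x : Fin n → ℝ => ∑ j, x j) :=
    continuous_finset_sum _ fun i _ => continuous_apply i
  have hKc : IsCompact K := by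
    have h1 : K = (Set.pi Set.univ fun j => Set.Icc (0:ℝ) (u j)) ∩
        {x | ∑ j, x j ≤ Ω} := by
      ext v
      constructor
      · rintro ⟨h1, h2⟩
        exact ⟨fun k _ => Set.mem_Icc.2 ⟨(h1 k).1, (h1 k).2⟩, h2⟩
      · rintro ⟨h1, h2⟩
        exact ⟨fun k => Set.mem_Icc.1 (h1 k (Set.mem_univ k)), h2⟩
    rw [h1]
    exact (isCompact_univ_pi fun j => isCompact_Icc).inter_right
      (isClosed_le hsumc continuous_const)
  have hfc : Continuous f :=
    continuous_finset_sum _ fun j _ =>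
      (continuous_const.add (continuous_const.mul (continuous_apply j))).max
        continuous_const
  obtain ⟨a, haK, ha⟩ := hKc.exists_isMaxOn hKne hfc.continuousOn
  set K' : Set (Fin n → ℝ) := K ∩ f ⁻¹' {f a} with hK'def
  have hK'c : IsCompact K' :=
    hKc.inter_right (isClosed_singleton.preimage hfc)
  have hK'ne : K'.Nonempty := ⟨a, haK, rfl⟩
  set g : (Fin n → ℝ) → ℝ := fun x => ∑ j, (x j) ^ 2 with hg
  have hgc : Continuous g :=
    continuous_finset_sum _ fun j _ => (continuous_apply j).pow 2
  obtain ⟨x, hxK', hx⟩ := hK'c.exists_isMaxOn hK'ne hgc.continuousOn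
  have hxK : x ∈ K := hxK'.1
  have hxfa : f x = f a := hxK'.2
  refine ⟨x, ⟨hxK.1, hxK.2⟩, ⟨⟨x, hxK, rfl⟩, ?_⟩, ?_⟩
  · rintro v ⟨w, hw, rfl⟩
    show f w ≤ f x
    rw [hxfa]
    exact ha hw
  · intro i j hi hj
    by_contra hij
    set δ : ℝ := min (u i - x i) (x j) with hδdef
    set δ' : ℝ := min (x i) (u j - x j) with hδ'def
    have hδ : 0 < δ := lt_min (by linarith [hi.2]) hj.1
    have hδ' : 0 < δ' := lt_min hi.1 (by linarith [hj.2])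
    have hδδ' : (0:ℝ) < δ + δ' := by linarith
    set d : Fin n → ℝ := fun k => (if k = i then (1:ℝ) else 0) +
      (if k = j then (-1:ℝ) else 0) with hd
    set w : ℝ → Fin n → ℝ := fun t k => x k + t * d k with hw
    have hdi : d i = 1 := by simp [hd, hij]
    have hdj : d j = -1 := by simp [hd, Ne.symm hij]
    have hdk : ∀ k, k ≠ i → k ≠ j → d k = 0 := by
      intro k h1 h2; simp [hd, h1, h2]
    have hwi : ∀ t, w t i = x i + t := by intro t; simp [hw, hdi]
    have hwj : ∀ t, w t j = x j - t := by intro t; simp [hw, hdj]; ring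
    have hwk : ∀ t k, k ≠ i → k ≠ j → w t k = x k := by
      intro t k h1 h2; simp [hw, hdk k h1 h2]
    have hsumd : ∑ k, d k = 0 := by
      simp only [hd, Finset.sum_add_distrib, Finset.sum_ite_eq',
        Finset.mem_univ, if_true]
      ring
    have hsumw : ∀ t, ∑ k, w t k = ∑ k, x k := by
      intro t
      simp only [hw, Finset.sum_add_distrib, ← Finset.mul_sum, hsumd, mul_zero,
        add_zero]
    have hfeas : ∀ t, -δ' ≤ t → t ≤ δ → w t ∈ K := by
      intro t ht1 ht2
      have hδ1 : δ ≤ u i - x i := min_le_left _ _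
      have hδ2 : δ ≤ x j := min_le_right _ _
      have hδ'1 : δ' ≤ x i := min_le_left _ _
      have hδ'2 : δ' ≤ u j - x j := min_le_right _ _
      refine ⟨fun k => ?_, by rw [hsumw]; exact hxK.2⟩
      by_cases h1 : k = i
      · subst h1; rw [hwi]; constructor <;> linarith
      · by_cases h2 : k = j
        · subst h2; rw [hwj]; constructor <;> linarith
        · rw [hwk t k h1 h2]; exact hxK.1 k
    have hyK : w δ ∈ K := hfeas δ (by linarith) (le_refl _)
    have hzK : w (-δ') ∈ K := hfeas (-δ') (le_refl _) (by linarith)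
    set F : Fin n → ℝ → ℝ := fun k v => max (γ k + β k * v) 0 with hF
    have hfy : f (w δ) = f x + (F i (x i + δ) - F i (x i)) +
        (F j (x j - δ) - F j (x j)) := by
      have h := sum_two n i j hij F x (w δ) (fun k h1 h2 => hwk δ k h1 h2)
      rw [hwi, hwj] at h
      exact h
    have hfz : f (w (-δ')) = f x + (F i (x i + -δ') - F i (x i)) +
        (F j (x j - -δ') - F j (x j)) := by
      have h := sum_two n i j hij F x (w (-δ')) (fun k h1 h2 => hwk (-δ') k h1 h2)
      rw [hwi, hwj] at h
      exact h
    set l : ℝ := δ' / (δ + δ') with hl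
    set m : ℝ := δ / (δ + δ') with hm
    have hl0 : 0 < l := div_pos hδ' hδδ'
    have hm0 : 0 < m := div_pos hδ hδδ'
    have hlm : l + m = 1 := by
      rw [hl, hm, ← add_div, add_comm δ' δ, div_self hδδ'.ne']
    have h0 : l * δ = m * δ' := by
      rw [hl, hm, div_mul_eq_mul_div, div_mul_eq_mul_div, mul_comm]
    have hcomb_i : x i = l * (x i + δ) + m * (x i + -δ') := by
      linear_combination (-(x i)) * hlm - h0
    have hcomb_j : x j = l * (x j - δ) + m * (x j - -δ') := by
      linear_combination (-(x j)) * hlm + h0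
    have hconv_i : F i (x i) ≤ l * F i (x i + δ) + m * F i (x i + -δ') := by
      have h := conv_piece (γ i) (β i) (x i + δ) (x i + -δ') l m hl0.le hm0.le hlm
      rw [← hcomb_i] at h
      exact h
    have hconv_j : F j (x j) ≤ l * F j (x j - δ) + m * F j (x j - -δ') := by
      have h := conv_piece (γ j) (β j) (x j - δ) (x j - -δ') l m hl0.le hm0.le hlm
      rw [← hcomb_j] at h
      exact h
    have hA : 0 ≤ l * (F i (x i + δ) - F i (x i)) + m * (F i (x i + -δ') - F i (x i)) := by
      have h1 : l * (F i (x i + δ)) + m * (F i (x i + -δ')) - F i (x i) =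
          l * (F i (x i + δ) - F i (x i)) + m * (F i (x i + -δ') - F i (x i)) := by
        linear_combination (F i (x i)) * hlm
      linarith [hconv_i, h1]
    have hB : 0 ≤ l * (F j (x j - δ) - F j (x j)) + m * (F j (x j - -δ') - F j (x j)) := by
      have h1 : l * (F j (x j - δ)) + m * (F j (x j - -δ')) - F j (x j) =
          l * (F j (x j - δ) - F j (x j)) + m * (F j (x j - -δ') - F j (x j)) := by
        linear_combination (F j (x j)) * hlm
      linarith [hconv_j, h1]
    have hfyle : f (w δ) ≤ f x := by rw [hxfa]; exact ha hyK
    have hfzle : f (w (-δ')) ≤ f x := by rw [hxfa]; exact ha hzK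
    have hkey : 0 ≤ l * (f (w δ) - f x) + m * (f (w (-δ')) - f x) := by
      have e : l * (f (w δ) - f x) + m * (f (w (-δ')) - f x) =
          (l * (F i (x i + δ) - F i (x i)) + m * (F i (x i + -δ') - F i (x i))) +
          (l * (F j (x j - δ) - F j (x j)) + m * (F j (x j - -δ') - F j (x j))) := by
        rw [hfy, hfz]; ring
      rw [e]; linarith [hA, hB]
    have t1 : l * (f (w δ) - f x) ≤ 0 :=
      mul_nonpos_of_nonneg_of_nonpos hl0.le (by linarith)
    have t2 : m * (f (w (-δ')) - f x) ≤ 0 :=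
      mul_nonpos_of_nonneg_of_nonpos hm0.le (by linarith)
    have hfyeq : f (w δ) = f x := by
      have h1 : l * (f (w δ) - f x) = 0 := le_antisymm t1 (by linarith)
      rcases mul_eq_zero.mp h1 with h | h
      · exact absurd h hl0.ne'
      · linarith
    have hfzeq : f (w (-δ')) = f x := by
      have h1 : m * (f (w (-δ')) - f x) = 0 := le_antisymm t2 (by linarith)
      rcases mul_eq_zero.mp h1 with h | h
      · exact absurd h hm0.ne'
      · linarith
    have hyK' : w δ ∈ K' := ⟨hyK, by
      simp only [Set.mem_preimage, Set.mem_singleton_iff]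
      rw [hfyeq, hxfa]⟩
    have hzK' : w (-δ') ∈ K' := ⟨hzK, by
      simp only [Set.mem_preimage, Set.mem_singleton_iff]
      rw [hfzeq, hxfa]⟩
    have hgy : g (w δ) ≤ g x := hx hyK'
    have hgz : g (w (-δ')) ≤ g x := hx hzK'
    set G : Fin n → ℝ → ℝ := fun _ v => v ^ 2 with hG
    have hgy' : g (w δ) = g x + ((x i + δ) ^ 2 - (x i) ^ 2) +
        ((x j - δ) ^ 2 - (x j) ^ 2) := by
      have h := sum_two n i j hij G x (w δ) (fun k h1 h2 => hwk δ k h1 h2)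
      rw [hwi, hwj] at h
      exact h
    have hgz' : g (w (-δ')) = g x + ((x i + -δ') ^ 2 - (x i) ^ 2) +
        ((x j - -δ') ^ 2 - (x j) ^ 2) := by
      have h := sum_two n i j hij G x (w (-δ')) (fun k h1 h2 => hwk (-δ') k h1 h2)
      rw [hwi, hwj] at h
      exact h
    have e3 : (x i + δ) ^ 2 - (x i) ^ 2 + ((x j - δ) ^ 2 - (x j) ^ 2) ≤ 0 := by
      linarith [hgy, hgy']
    have e4 : (x i + -δ') ^ 2 - (x i) ^ 2 + ((x j - -δ') ^ 2 - (x j) ^ 2) ≤ 0 := by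
      linarith [hgz, hgz']
    have e3' : 2 * δ * ((x i - x j) + δ) ≤ 0 := by
      have : 2 * δ * ((x i - x j) + δ) =
          (x i + δ) ^ 2 - (x i) ^ 2 + ((x j - δ) ^ 2 - (x j) ^ 2) := by ring
      linarith [e3, this.le, this.ge]
    have e4' : 2 * δ' * ((x j - x i) + δ') ≤ 0 := by
      have : 2 * δ' * ((x j - x i) + δ') =
          (x i + -δ') ^ 2 - (x i) ^ 2 + ((x j - -δ') ^ 2 - (x j) ^ 2) := by ring
      linarith [e4, this.le, this.ge]
    have h4 : (x i - x j) + δ ≤ 0 := by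
      by_contra h
      push_neg at h
      have := mul_pos (by linarith : (0:ℝ) < 2 * δ) h
      linarith [e3']
    have h5 : (x j - x i) + δ' ≤ 0 := by
      by_contra h
      push_neg at h
      have := mul_pos (by linarith : (0:ℝ) < 2 * δ') h
      linarith [e4']
    linarith [h4, h5, hδ, hδ']
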